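/- Assume 16γ > γ₀. If θ_w ∈ (0, π/2) satisfies cos θ_w = √(μ/(μ + 4√(γ/γ₀) − 1)), then W′(θ_w) = 0, where W(θ) = GM·(M/2)·(Mγ₀/cos²θ + 8mγ/(cos²θ + μ sin²θ)). -/

import Mathlib

open Real

theorem stmt_4 (G M m γ₀ γ μ : ℝ) (hG : 0 < G) (hM : 0 < M) (hm : 0 < m)
    (hγ₀ : 0 < γ₀) (hγ : 0 < γ) (hcond : 16*γ > γ₀) (hμ : μ = (2*M + m)/m)
    (W : ℝ → ℝ)
    (hW : ∀ θ, W θ = G*M*(M/2) *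
      (M*γ₀ / Real.cos θ^2 + 8*m*γ / (Real.cos θ^2 + μ * Real.sin θ^2)))
    (θw : ℝ) (hθw : θw ∈ Set.Ioo 0 (Real.pi/2))
    (hcos : Real.cos θw = Real.sqrt (μ/(μ + 4*Real.sqrt (γ/γ₀) - 1))) :
    deriv W θw = 0 := by
  obtain ⟨h0, h2⟩ := hθw
  set c := Real.cos θw with hcdef
  set s := Real.sin θw with hsdef
  set r := Real.sqrt (γ/γ₀) with hrdef
  have hc : 0 < c := Real.cos_pos_of_mem_Ioo ⟨by linarith [Real.pi_pos], h2⟩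
  have hs : 0 < s := Real.sin_pos_of_pos_of_lt_pi h0 (by linarith [Real.pi_pos])
  have hr : 0 < r := Real.sqrt_pos.mpr (div_pos hγ hγ₀)
  have hμ1 : 1 < μ := by
    rw [hμ]; rw [lt_div_iff₀ hm]; linarith
  have hD : 0 < μ + 4*r - 1 := by nlinarith
  have hr2 : r^2 = γ/γ₀ := Real.sq_sqrt (le_of_lt (div_pos hγ hγ₀))
  have hc2 : c^2 = μ/(μ + 4*r - 1) := by
    rw [hcos]; exact Real.sq_sqrt (le_of_lt (div_pos (by linarith) hD))
  have hs2 : s^2 = 1 - c^2 := by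
    have := Real.sin_sq_add_cos_sq θw; linarith
  have hkey : c^2 + μ * s^2 = 4*r*c^2 := by
    rw [hs2, hc2]; field_simp; ring
  have hden : c^2 + μ * s^2 ≠ 0 := by
    rw [hkey]; positivity
  have hγeq : γ = r^2 * γ₀ := by
    rw [hr2]; field_simp
  have h1 : HasDerivAt (fun θ => Real.cos θ ^ 2) (2 * c ^ 1 * (-s)) θw := by
    simpa using (Real.hasDerivAt_cos θw).fun_pow 2
  have h1s : HasDerivAt (fun θ => Real.sin θ ^ 2) (2 * s ^ 1 * c) θw := by
    simpa using (Real.hasDerivAt_sin θw).fun_pow 2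
  have hinv1 : HasDerivAt (fun θ => (Real.cos θ ^ 2)⁻¹)
      (-(2 * c ^ 1 * (-s)) / (c^2)^2) θw := h1.inv (by positivity)
  have h2d : HasDerivAt (fun θ => Real.cos θ ^ 2 + μ * Real.sin θ ^ 2)
      (2 * c ^ 1 * (-s) + μ * (2 * s ^ 1 * c)) θw := h1.add (h1s.const_mul μ)
  have hinv2 : HasDerivAt (fun θ => (Real.cos θ ^ 2 + μ * Real.sin θ ^ 2)⁻¹)
      (-(2 * c ^ 1 * (-s) + μ * (2 * s ^ 1 * c)) / (c^2 + μ*s^2)^2) θw :=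
    h2d.inv hden
  have hWfun : W = fun θ => G*M*(M/2) *
      (M*γ₀ * (Real.cos θ^2)⁻¹ + 8*m*γ * (Real.cos θ^2 + μ * Real.sin θ^2)⁻¹) := by
    funext θ; rw [hW θ]; ring
  have hd : HasDerivAt W
      (G*M*(M/2) * (M*γ₀ * (-(2 * c ^ 1 * (-s)) / (c^2)^2)
        + 8*m*γ * (-(2 * c ^ 1 * (-s) + μ * (2 * s ^ 1 * c)) / (c^2 + μ*s^2)^2))) θw := by
    rw [hWfun]
    exact ((hinv1.const_mul (M*γ₀)).add (hinv2.const_mul (8*m*γ))).const_mul (G*M*(M/2))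
  rw [hd.deriv]
  rw [hkey, hγeq]
  have hμm : m * (μ - 1) = 2*M := by rw [hμ]; field_simp; ring
  field_simp
  linear_combination (-8*G*M^2*γ₀*s) * hμm
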